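/- The linear map \(\phi\) from \(\mathcal{X}=\{(A_1,A_2,A_3): A_i\in\mathcal{P}_2\}\) to \(\mathcal{Y}=\{(H_{ij})_{1\le i,j\le 3}: H_{ij}\in\mathcal{P}_1,\ H_{ij}=H_{ji}\}\), given by \(\phi(A)_{ij}=\partial_i A_j+\partial_j A_i\), is a linear isomorphism between two vector spaces each of dimension 18. -/

import Mathlib

open MvPolynomial

/-- `𝒳 = {(A₁,A₂,A₃) : Aᵢ ∈ 𝒫₂}` as a submodule of `Fin 3 → MvPolynomial (Fin 3) ℝ`. -/
noncomputable def scriptX : Submodule ℝ (Fin 3 → MvPolynomial (Fin 3) ℝ) :=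
  Submodule.pi Set.univ fun _ => MvPolynomial.homogeneousSubmodule (Fin 3) ℝ 2

/-- The linear map `H ↦ H i j - H j i`. -/
noncomputable def symTest (i j : Fin 3) :
    (Fin 3 → Fin 3 → MvPolynomial (Fin 3) ℝ) →ₗ[ℝ] MvPolynomial (Fin 3) ℝ :=
  ((LinearMap.proj j : (Fin 3 → MvPolynomial (Fin 3) ℝ) →ₗ[ℝ] _).comp
      (LinearMap.proj i : (Fin 3 → Fin 3 → MvPolynomial (Fin 3) ℝ) →ₗ[ℝ] _))
    - ((LinearMap.proj i : (Fin 3 → MvPolynomial (Fin 3) ℝ) →ₗ[ℝ] _).comp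
      (LinearMap.proj j : (Fin 3 → Fin 3 → MvPolynomial (Fin 3) ℝ) →ₗ[ℝ] _))

/-- `𝒴 = {(H_{ij}) : H_{ij} ∈ 𝒫₁, H_{ij} = H_{ji}}` as a submodule of
`Fin 3 → Fin 3 → MvPolynomial (Fin 3) ℝ`. -/
noncomputable def scriptY : Submodule ℝ (Fin 3 → Fin 3 → MvPolynomial (Fin 3) ℝ) :=
  (Submodule.pi Set.univ fun _ =>
      Submodule.pi Set.univ fun _ => MvPolynomial.homogeneousSubmodule (Fin 3) ℝ 1) ⊓
  ⨅ (i : Fin 3) (j : Fin 3), LinearMap.ker (symTest i j)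

namespace PhiIso

local notation "P" => MvPolynomial (Fin 3) ℝ

/-! ### Basic calculus lemmas -/

lemma degree_univ (d : Fin 3 →₀ ℕ) : d.degree = ∑ i, d i := by
  rw [Finsupp.degree]
  exact Finset.sum_subset (Finset.subset_univ _) (by intro i _ hi; simpa using hi)

lemma X_mul_pderiv_monomial (i : Fin 3) (d : Fin 3 →₀ ℕ) (a : ℝ) :
    X i * pderiv i (monomial d a) = (d i) • monomial d a := by
  rw [pderiv_monomial]
  rcases Nat.eq_zero_or_pos (d i) with h | h
  · simp [h]
  · rw [X, monomial_mul, one_mul]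
    have : Finsupp.single i 1 + (d - Finsupp.single i 1) = d := by
      ext j
      rcases eq_or_ne j i with rfl | hj
      · simp [Finsupp.single_apply]; omega
      · simp [Finsupp.single_apply, hj.symm]
    rw [this, smul_monomial]
    congr 1
    push_cast
    ring

lemma euler {n : ℕ} {p : P} (hp : p.IsHomogeneous n) :
    ∑ i, X i * pderiv i p = n • p := by
  calc ∑ i, X i * pderiv i p
      = ∑ i, ∑ d ∈ p.support, X i * pderiv i (monomial d (coeff d p)) := by
        refine Finset.sum_congr rfl fun i _ => ?_
        conv_lhs => rw [p.as_sum]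
        rw [map_sum, Finset.mul_sum]
    _ = ∑ d ∈ p.support, ∑ i, X i * pderiv i (monomial d (coeff d p)) := Finset.sum_comm
    _ = ∑ d ∈ p.support, n • monomial d (coeff d p) := by
        refine Finset.sum_congr rfl fun d hd => ?_
        have hdeg : d.degree = n := by
          rw [Finsupp.degree_eq_weight_one]
          exact hp (MvPolynomial.mem_support_iff.mp hd)
        calc ∑ i, X i * pderiv i (monomial d (coeff d p))
            = ∑ i, (d i) • monomial d (coeff d p) :=
              Finset.sum_congr rfl fun i _ => X_mul_pderiv_monomial i d _
          _ = (∑ i, d i) • monomial d (coeff d p) := by rw [Finset.sum_smul]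
          _ = n • monomial d (coeff d p) := by rw [← degree_univ, hdeg]
    _ = n • p := by rw [← Finset.smul_sum, ← p.as_sum]

lemma pderiv_isHomog {n : ℕ} {p : P} (hp : p.IsHomogeneous n) (i : Fin 3) :
    (pderiv i p).IsHomogeneous (n - 1) := by
  conv in pderiv i p => rw [p.as_sum]
  rw [map_sum]
  apply MvPolynomial.IsHomogeneous.sum
  intro d hd
  rw [pderiv_monomial]
  rcases Nat.eq_zero_or_pos (d i) with h | h
  · simp only [h, Nat.cast_zero, mul_zero]
    rw [monomial_zero]
    exact isHomogeneous_zero _ _ _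
  · apply isHomogeneous_monomial
    have hdeg : d.degree = n := by
      rw [Finsupp.degree_eq_weight_one]
      exact hp (MvPolynomial.mem_support_iff.mp hd)
    rw [degree_univ] at hdeg ⊢
    have hle : d i ≥ 1 := h
    have hsub : ∀ j : Fin 3, ((d - Finsupp.single i 1) : Fin 3 →₀ ℕ) j
        = d j - (Finsupp.single i 1) j := fun j => Finsupp.tsub_apply d _ j
    rw [Fin.sum_univ_three] at hdeg ⊢
    rw [hsub, hsub, hsub]
    fin_cases i <;>
      simp only [Finsupp.single_apply, if_pos rfl, if_neg] <;>
      simp_all [Finsupp.single_apply] <;> omega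

lemma pderiv_homog0 {p : P} (hp : p.IsHomogeneous 0) (i : Fin 3) : pderiv i p = 0 := by
  apply pderiv_eq_zero_of_notMem_vars
  intro hv
  obtain ⟨d, hd, hdi⟩ := (mem_vars i).mp hv
  have : d.degree = 0 := by
    rw [Finsupp.degree_eq_weight_one]
    exact hp (MvPolynomial.mem_support_iff.mp hd)
  rw [Finsupp.degree_eq_zero_iff] at this
  simp [this] at hdi

lemma pderiv2_homog1 {p : P} (hp : p.IsHomogeneous 1) (i j : Fin 3) :
    pderiv i (pderiv j p) = 0 :=
  pderiv_homog0 (pderiv_isHomog hp j) i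

/-! ### Sum manipulation lemmas -/

lemma sum_pderivX_mul (j : Fin 3) (f : Fin 3 → P) :
    ∑ k, pderiv j (X k) * f k = f j := by
  rw [Finset.sum_eq_single j]
  · simp
  · intro k _ hk; rw [pderiv_X_of_ne hk, zero_mul]
  · simp

lemma L1 (B : Fin 3 → P) (j : Fin 3) :
    pderiv j (∑ k, X k * B k) = B j + ∑ k, X k * pderiv j (B k) := by
  rw [map_sum]
  calc ∑ k, pderiv j (X k * B k)
      = ∑ k, (pderiv j (X k) * B k + X k * pderiv j (B k)) :=
        Finset.sum_congr rfl fun k _ => by rw [pderiv_mul]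
    _ = ∑ k, pderiv j (X k) * B k + ∑ k, X k * pderiv j (B k) :=
        Finset.sum_add_distrib
    _ = B j + ∑ k, X k * pderiv j (B k) := by rw [sum_pderivX_mul]

lemma L2 (G : Fin 3 → Fin 3 → P) (j : Fin 3) :
    pderiv j (∑ l, ∑ k, X l * X k * G l k)
      = ∑ k, X k * G j k + ∑ l, X l * G l j
        + ∑ l, ∑ k, X l * X k * pderiv j (G l k) := by
  rw [map_sum]
  calc ∑ l, pderiv j (∑ k, X l * X k * G l k)
      = ∑ l, (pderiv j (X l) * (∑ k, X k * G l k)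
          + (X l * (∑ k, pderiv j (X k) * G l k)
          + ∑ k, X l * X k * pderiv j (G l k))) := by
        refine Finset.sum_congr rfl fun l _ => ?_
        rw [map_sum, Finset.mul_sum, Finset.mul_sum, ← Finset.sum_add_distrib,
          ← Finset.sum_add_distrib]
        refine Finset.sum_congr rfl fun k _ => ?_
        rw [pderiv_mul, pderiv_mul]
        ring
    _ = ∑ l, pderiv j (X l) * (∑ k, X k * G l k)
        + (∑ l, X l * (∑ k, pderiv j (X k) * G l k)
        + ∑ l, ∑ k, X l * X k * pderiv j (G l k)) := by
        rw [Finset.sum_add_distrib, Finset.sum_add_distrib]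
    _ = ∑ k, X k * G j k + ∑ l, X l * G l j
        + ∑ l, ∑ k, X l * X k * pderiv j (G l k) := by
        rw [sum_pderivX_mul j (fun l => ∑ k, X k * G l k)]
        rw [show (∑ l, X l * ∑ k, pderiv j (X k) * G l k) = ∑ l, X l * G l j from
          Finset.sum_congr rfl fun l _ => by rw [sum_pderivX_mul j (G l)]]
        ring

lemma h4 : ((4 : ℕ) : P) * C (4⁻¹ : ℝ) = 1 := by
  have : ((4 : ℕ) : P) = C ((4 : ℕ) : ℝ) := by rw [map_natCast]
  rw [this, ← map_mul, ← map_one C]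
  norm_num

/-! ### The two key identities -/

lemma psi_phi_aux (A : Fin 3 → P) (hA : ∀ k, (A k).IsHomogeneous 2) (j : Fin 3) :
    (∑ i, X i * (pderiv i (A j) + pderiv j (A i)))
      - C (4⁻¹ : ℝ) * pderiv j (∑ l, ∑ k, X l * X k * (pderiv l (A k) + pderiv k (A l)))
      = A j := by
  have hE : ∀ k, ∑ i, X i * pderiv i (A k) = 2 • A k := fun k => euler (hA k)
  have hDjS : pderiv j (∑ k, X k * A k) = A j + ∑ i, X i * pderiv j (A i) := L1 A j
  have hQ : (∑ l, ∑ k, X l * X k * (pderiv l (A k) + pderiv k (A l)))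
      = (4 : ℕ) • (∑ k, X k * A k) := by
    have split : (∑ l, ∑ k, X l * X k * (pderiv l (A k) + pderiv k (A l)))
        = (∑ l, ∑ k, X l * X k * pderiv l (A k))
          + ∑ l, ∑ k, X l * X k * pderiv k (A l) := by
      rw [← Finset.sum_add_distrib]
      refine Finset.sum_congr rfl fun l _ => ?_
      rw [← Finset.sum_add_distrib]
      exact Finset.sum_congr rfl fun k _ => by ring
    have swap : (∑ l, ∑ k, X l * X k * pderiv k (A l))
        = ∑ l, ∑ k, X l * X k * pderiv l (A k) := by
      rw [Finset.sum_comm]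
      exact Finset.sum_congr rfl fun k _ => Finset.sum_congr rfl fun l _ => by ring
    have main : (∑ l, ∑ k, X l * X k * pderiv l (A k)) = (2 : ℕ) • ∑ k, X k * A k := by
      rw [Finset.sum_comm]
      calc ∑ k, ∑ l, X l * X k * pderiv l (A k)
          = ∑ k, (∑ l, X l * pderiv l (A k)) * X k := by
            refine Finset.sum_congr rfl fun k _ => ?_
            rw [Finset.sum_mul]
            exact Finset.sum_congr rfl fun l _ => by ring
        _ = ∑ k, ((2 : ℕ) • A k) * X k := by
            exact Finset.sum_congr rfl fun k _ => by rw [hE k]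
        _ = (2 : ℕ) • ∑ k, X k * A k := by
            rw [Finset.smul_sum]
            exact Finset.sum_congr rfl fun k _ => by
              rw [smul_mul_assoc]
              congr 1
              ring
    rw [split, swap, main, ← add_smul]
  have expand : (∑ i, X i * (pderiv i (A j) + pderiv j (A i)))
      = (2 : ℕ) • A j + (∑ i, X i * pderiv j (A i)) := by
    calc ∑ i, X i * (pderiv i (A j) + pderiv j (A i))
        = ∑ i, (X i * pderiv i (A j) + X i * pderiv j (A i)) :=
          Finset.sum_congr rfl fun i _ => by ring
      _ = (∑ i, X i * pderiv i (A j)) + ∑ i, X i * pderiv j (A i) := Finset.sum_add_distrib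
      _ = _ := by rw [hE j]
  rw [expand, hQ, map_nsmul]
  have hsum : (∑ i, X i * pderiv j (A i)) = pderiv j (∑ k, X k * A k) - A j := by
    rw [hDjS]; ring
  rw [hsum]
  set s := pderiv j (∑ k, X k * A k)
  simp only [nsmul_eq_mul]
  linear_combination (-(s : P)) * h4

lemma phi_psi_aux (H : Fin 3 → Fin 3 → P) (h1 : ∀ l k, (H l k).IsHomogeneous 1)
    (h2 : ∀ l k, H l k = H k l) (i j : Fin 3) :
    pderiv i ((∑ k, X k * H k j)
        - C (4⁻¹ : ℝ) * pderiv j (∑ l, ∑ k, X l * X k * H l k))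
      + pderiv j ((∑ k, X k * H k i)
        - C (4⁻¹ : ℝ) * pderiv i (∑ l, ∑ k, X l * X k * H l k))
      = H i j := by
  have hDQ : ∀ m, pderiv m (∑ l, ∑ k, X l * X k * H l k)
      = (2 : ℕ) • (∑ k, X k * H k m) + ∑ l, ∑ k, X l * X k * pderiv m (H l k) := by
    intro m
    rw [L2 H m, show (∑ k, X k * H m k) = ∑ k, X k * H k m from
      Finset.sum_congr rfl fun k _ => by rw [h2 m k], two_smul]
  have hDR : ∀ a m, pderiv a (∑ l, ∑ k, X l * X k * pderiv m (H l k))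
      = (∑ k, X k * pderiv m (H a k)) + ∑ l, X l * pderiv m (H l a) := by
    intro a m
    rw [L2 (fun l k => pderiv m (H l k)) a]
    have : (∑ l, ∑ k, X l * X k * pderiv a (pderiv m (H l k))) = 0 :=
      Finset.sum_eq_zero fun l _ => Finset.sum_eq_zero fun k _ => by
        rw [pderiv2_homog1 (h1 l k) a m, mul_zero]
    rw [this, add_zero]
  have hDF : ∀ a m, pderiv a (∑ k, X k * H k m)
      = H a m + ∑ k, X k * pderiv a (H k m) := fun a m => L1 (fun k => H k m) a
  -- abbreviations
  set Sa := ∑ k, X k * pderiv i (H k j) with hSa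
  set Sb := ∑ k, X k * pderiv j (H k i) with hSb
  have e1 : pderiv i (pderiv j (∑ l, ∑ k, X l * X k * H l k))
      = (2 : ℕ) • (H i j + Sa) + (Sb + Sb) := by
    rw [hDQ j, map_add, map_nsmul, hDF i j, hDR i j,
      show (∑ k, X k * pderiv j (H i k)) = Sb from
        Finset.sum_congr rfl fun k _ => by rw [h2 i k]]
  have e2 : pderiv j (pderiv i (∑ l, ∑ k, X l * X k * H l k))
      = (2 : ℕ) • (H i j + Sb) + (Sa + Sa) := by
    rw [hDQ i, map_add, map_nsmul, hDF j i, hDR j i,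
      show H j i = H i j from h2 j i,
      show (∑ k, X k * pderiv i (H j k)) = Sa from
        Finset.sum_congr rfl fun k _ => by rw [h2 j k]]
  rw [map_sub, map_sub, pderiv_C_mul, pderiv_C_mul, e1, e2, hDF i j, hDF j i]
  rw [show H j i = H i j from h2 j i]
  simp only [nsmul_eq_mul]
  linear_combination (-(H i j) - Sa - Sb) * h4

/-! ### Dimensions -/

noncomputable def degEquiv (n : ℕ) :
    {d : Fin 3 →₀ ℕ // d ∈ {d : Fin 3 →₀ ℕ | d.degree = n}} ≃
      {v : Fin 3 → ℕ // v ∈ Finset.Nat.antidiagonalTuple 3 n} :=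
  Equiv.subtypeEquiv (Finsupp.equivFunOnFinite) (fun d => by
    rw [Finset.Nat.mem_antidiagonalTuple]
    simp only [Set.mem_setOf_eq, degree_univ]
    rfl)

lemma finrank_homog (n : ℕ) :
    Module.finrank ℝ (homogeneousSubmodule (Fin 3) ℝ n) =
      (Finset.Nat.antidiagonalTuple 3 n).card := by
  have h := homogeneousSubmodule_eq_finsupp_supported (Fin 3) ℝ n
  have e1 : (homogeneousSubmodule (Fin 3) ℝ n) ≃ₗ[ℝ]
      (restrictSupport ℝ {d : Fin 3 →₀ ℕ | d.degree = n} :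
        Submodule ℝ (MvPolynomial (Fin 3) ℝ)) := LinearEquiv.ofEq _ _ h
  haveI : Fintype {d : Fin 3 →₀ ℕ // d ∈ {d : Fin 3 →₀ ℕ | d.degree = n}} :=
    Fintype.ofEquiv _ (degEquiv n).symm
  have b := basisRestrictSupport ℝ {d : Fin 3 →₀ ℕ | d.degree = n}
  haveI := Module.Finite.of_basis b
  rw [LinearEquiv.finrank_eq e1, Module.finrank_eq_card_basis b,
    Fintype.card_congr (degEquiv n), Fintype.card_coe]

lemma homog_finite (n : ℕ) : Module.Finite ℝ (homogeneousSubmodule (Fin 3) ℝ n) := by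
  have h := homogeneousSubmodule_eq_finsupp_supported (Fin 3) ℝ n
  have e1 : (homogeneousSubmodule (Fin 3) ℝ n) ≃ₗ[ℝ]
      (restrictSupport ℝ {d : Fin 3 →₀ ℕ | d.degree = n} :
        Submodule ℝ (MvPolynomial (Fin 3) ℝ)) := LinearEquiv.ofEq _ _ h
  haveI : Fintype {d : Fin 3 →₀ ℕ // d ∈ {d : Fin 3 →₀ ℕ | d.degree = n}} :=
    Fintype.ofEquiv _ (degEquiv n).symm
  have b := basisRestrictSupport ℝ {d : Fin 3 →₀ ℕ | d.degree = n}
  haveI := Module.Finite.of_basis b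
  exact Module.Finite.equiv e1.symm

def piSubEquiv {ι : Type*} {M : ι → Type*} [∀ i, AddCommGroup (M i)]
    [∀ i, Module ℝ (M i)] (p : ∀ i, Submodule ℝ (M i)) :
    (Submodule.pi Set.univ p) ≃ₗ[ℝ] ∀ i, p i where
  toFun x i := ⟨x.1 i, x.2 i (Set.mem_univ i)⟩
  map_add' _ _ := rfl
  map_smul' _ _ := rfl
  invFun v := ⟨fun i => v i, fun i _ => (v i).2⟩
  left_inv _ := rfl
  right_inv _ := rfl

lemma finrank_scriptX : Module.finrank ℝ scriptX = 18 := by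
  haveI : Module.Free ℝ (homogeneousSubmodule (Fin 3) ℝ 2) :=
    Module.Free.of_divisionRing ℝ _
  haveI := homog_finite 2
  rw [scriptX, LinearEquiv.finrank_eq (piSubEquiv (fun _ : Fin 3 => homogeneousSubmodule (Fin 3) ℝ 2)), Module.finrank_pi_fintype,
    Finset.sum_congr rfl fun i _ => finrank_homog 2]
  decide

/-! ### The maps -/

noncomputable def phi0 : (Fin 3 → P) →ₗ[ℝ] (Fin 3 → Fin 3 → P) where
  toFun A i j := pderiv i (A j) + pderiv j (A i)
  map_add' A B := by
    funext i j
    simp only [Pi.add_apply, map_add]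
    ring
  map_smul' c A := by
    funext i j
    simp only [Pi.smul_apply, Derivation.map_smul, RingHom.id_apply, smul_add]

noncomputable def psi0 : (Fin 3 → Fin 3 → P) →ₗ[ℝ] (Fin 3 → P) where
  toFun H j := (∑ k, X k * H k j)
    - C (4⁻¹ : ℝ) * pderiv j (∑ l, ∑ k, X l * X k * H l k)
  map_add' G H := by
    funext j
    simp only [Pi.add_apply, mul_add, Finset.sum_add_distrib, map_add]
    ring
  map_smul' c H := by
    funext j
    simp only [Pi.smul_apply, RingHom.id_apply, mul_smul_comm, ← Finset.smul_sum,
      Derivation.map_smul, smul_sub]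

lemma symTest_apply (i j : Fin 3) (H : Fin 3 → Fin 3 → P) :
    symTest i j H = H i j - H j i := rfl

lemma mem_scriptY_iff (H : Fin 3 → Fin 3 → P) :
    H ∈ scriptY ↔ (∀ l k, (H l k).IsHomogeneous 1) ∧ ∀ l k, H l k = H k l := by
  rw [scriptY, Submodule.mem_inf]
  constructor
  · rintro ⟨hm, hk⟩
    simp only [Submodule.mem_iInf, LinearMap.mem_ker] at hk
    refine ⟨fun l k => Submodule.mem_pi.mp (Submodule.mem_pi.mp hm l trivial) k trivial,
      fun l k => ?_⟩
    have := hk l k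
    rw [symTest_apply, sub_eq_zero] at this
    exact this
  · rintro ⟨hhom, hsym⟩
    refine ⟨Submodule.mem_pi.mpr fun l _ => Submodule.mem_pi.mpr fun k _ => hhom l k, ?_⟩
    simp only [Submodule.mem_iInf, LinearMap.mem_ker]
    intro l k
    rw [symTest_apply, hsym l k, sub_self]

lemma mem_scriptX_iff (A : Fin 3 → P) :
    A ∈ scriptX ↔ ∀ k, (A k).IsHomogeneous 2 := by
  rw [scriptX]
  constructor
  · intro h k; exact Submodule.mem_pi.mp h k trivial
  · intro h; exact Submodule.mem_pi.mpr fun k _ => h k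

lemma phi0_mem {A : Fin 3 → P} (hA : A ∈ scriptX) : phi0 A ∈ scriptY := by
  rw [mem_scriptX_iff] at hA
  rw [mem_scriptY_iff]
  constructor
  · intro l k
    exact (pderiv_isHomog (hA k) l).add (pderiv_isHomog (hA l) k)
  · intro l k
    show pderiv l (A k) + pderiv k (A l) = pderiv k (A l) + pderiv l (A k)
    ring

lemma psi0_mem {H : Fin 3 → Fin 3 → P} (hH : H ∈ scriptY) : psi0 H ∈ scriptX := by
  rw [mem_scriptY_iff] at hH
  obtain ⟨h1, _⟩ := hH
  rw [mem_scriptX_iff]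
  intro j
  show ((∑ k, X k * H k j) - C (4⁻¹ : ℝ) * pderiv j (∑ l, ∑ k, X l * X k * H l k)).IsHomogeneous 2
  apply MvPolynomial.IsHomogeneous.sub
  · exact IsHomogeneous.sum _ _ _ fun k _ => (isHomogeneous_X _ k).mul (h1 k j)
  · have hQ : (∑ l, ∑ k, X l * X k * H l k).IsHomogeneous 3 :=
      IsHomogeneous.sum _ _ _ fun l _ => IsHomogeneous.sum _ _ _ fun k _ =>
        ((isHomogeneous_X _ l).mul (isHomogeneous_X _ k)).mul (h1 l k)
    have := pderiv_isHomog hQ j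
    exact this.C_mul _

end PhiIso

/-- The map `φ(A)_{ij} = ∂ᵢAⱼ + ∂ⱼAᵢ` is a linear isomorphism between `𝒳` and `𝒴`,
two vector spaces each of dimension 18. -/
theorem phi_linear_isomorphism :
    Module.finrank ℝ scriptX = 18 ∧ Module.finrank ℝ scriptY = 18 ∧
    ∃ e : scriptX ≃ₗ[ℝ] scriptY,
      ∀ (A : scriptX) (i j : Fin 3),
        (e A : Fin 3 → Fin 3 → MvPolynomial (Fin 3) ℝ) i j =
          pderiv i ((A : Fin 3 → MvPolynomial (Fin 3) ℝ) j)
            + pderiv j ((A : Fin 3 → MvPolynomial (Fin 3) ℝ) i) := by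
  have hXY : ∀ A ∈ scriptX, PhiIso.phi0 A ∈ scriptY := fun A hA => PhiIso.phi0_mem hA
  have hYX : ∀ H ∈ scriptY, PhiIso.psi0 H ∈ scriptX := fun H hH => PhiIso.psi0_mem hH
  let f : scriptX →ₗ[ℝ] scriptY := PhiIso.phi0.restrict hXY
  let g : scriptY →ₗ[ℝ] scriptX := PhiIso.psi0.restrict hYX
  have hgf : g.comp f = LinearMap.id := by
    apply LinearMap.ext
    intro x
    apply Subtype.ext
    show PhiIso.psi0 (PhiIso.phi0 x) = (x : Fin 3 → MvPolynomial (Fin 3) ℝ)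
    funext j
    exact PhiIso.psi_phi_aux x ((PhiIso.mem_scriptX_iff _).mp x.2) j
  have hfg : f.comp g = LinearMap.id := by
    apply LinearMap.ext
    intro H
    apply Subtype.ext
    show PhiIso.phi0 (PhiIso.psi0 H) = (H : Fin 3 → Fin 3 → MvPolynomial (Fin 3) ℝ)
    obtain ⟨h1, h2⟩ := (PhiIso.mem_scriptY_iff _).mp H.2
    funext i j
    exact PhiIso.phi_psi_aux H h1 h2 i j
  let e : scriptX ≃ₗ[ℝ] scriptY := LinearEquiv.ofLinear f g hfg hgf
  refine ⟨PhiIso.finrank_scriptX, ?_, e, fun A i j => rfl⟩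
  rw [← e.finrank_eq]
  exact PhiIso.finrank_scriptX
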